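/- arXiv:2508.05788 — 2 statements merged into one kernel-verified Lean document; each statement's English description precedes it below -/
import Mathlib

section
/- Let n ∈ ℕ, A a real diagonalizable n×n matrix with real eigenvalues, and α ∈ (0,1]. Then E_α(A·(t+s)^α) = E_α(A·t^α)·E_α(A·s^α) for all t, s ≥ 0 if and only if α = 1 or A = 0. -/
open Real Filter

set_option maxHeartbeats 1000000

noncomputable def mlE (α z : ℝ) : ℝ := ∑' k : ℕ, (Real.Gamma (α * k + 1))⁻¹ * z ^ k

noncomputable def matrixMittagLeffler {n : ℕ} (α : ℝ) (M : Matrix (Fin n) (Fin n) ℝ) :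
    Matrix (Fin n) (Fin n) ℝ :=
  ∑' k : ℕ, (Real.Gamma (α * k + 1))⁻¹ • M ^ k


lemma ml_summable_abs {α : ℝ} (hα : 0 < α) (x : ℝ) (hx : 0 ≤ x) :
    Summable (fun k : ℕ => x ^ k / Real.Gamma (α * k + 1)) := by
  set q : ℕ := ⌈1/α⌉₊ with hq
  have hq1 : 1 ≤ q := Nat.one_le_ceil_iff.mpr (by positivity)
  have : NeZero q := ⟨by omega⟩
  have hαq : 1 ≤ α * q := by
    have h1 := Nat.le_ceil (1/α)
    calc (1:ℝ) = α * (1/α) := by field_simp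
    _ ≤ α * q := by
        exact mul_le_mul_of_nonneg_left h1 hα.le
  set f : ℕ → ℝ := fun k => x ^ k / Real.Gamma (α * k + 1) with hf
  have hΓpos : ∀ k : ℕ, 0 < Real.Gamma (α * k + 1) := by
    intro k
    apply Real.Gamma_pos_of_pos
    positivity
  rw [← Equiv.summable_iff (Nat.divModEquiv q).symm]
  set C : ℝ := (max 1 x) ^ q with hC
  have hC0 : 0 < C := by positivity
  set r : ℝ := x ^ q with hr
  have hg : Summable (fun p : ℕ × Fin q => C * r ^ p.1 / (Nat.factorial p.1)) := by
    apply (summable_prod_of_nonneg ?_).mpr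
    constructor
    · intro j; exact Summable.of_finite
    · have hbase : Summable (fun j : ℕ => ((q:ℝ) * C) * (r ^ j / (Nat.factorial j : ℝ))) :=
        (Real.summable_pow_div_factorial r).mul_left _
      apply hbase.congr
      intro j
      rw [tsum_fintype]
      simp only [Finset.sum_const, Finset.card_univ, Fintype.card_fin, nsmul_eq_mul]
      ring
    · intro p; positivity
  apply hg.of_norm_bounded_eventually
  rw [Filter.eventually_cofinite]
  apply Set.Finite.subset (Set.Finite.prod (Set.finite_Iio 2) (Set.finite_univ))
    (s := ((Set.Iio 2) ×ˢ (Set.univ : Set (Fin q))))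
  rintro ⟨j, i⟩ hp
  simp only [Set.mem_setOf_eq, not_le] at hp
  refine ⟨?_, trivial⟩
  by_contra h
  simp only [Set.mem_Iio, not_lt] at h
  refine hp.not_ge ?_
  simp only [Function.comp, Nat.divModEquiv_symm_apply, hf]
  have hji : (j:ℝ) ≤ α * (↑(j * q + (i:ℕ))) := by
    have h1 : (j:ℝ) * 1 ≤ (j:ℝ) * (α * q) := by
      apply mul_le_mul_of_nonneg_left hαq (by positivity)
    push_cast
    nlinarith [mul_nonneg hα.le (Nat.cast_nonneg (i:ℕ))]
  have hnum : x ^ (j * q + (i : ℕ)) ≤ C * r ^ j := by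
    rw [pow_add, pow_mul']
    rw [mul_comm]
    gcongr
    calc x ^ (i:ℕ) ≤ (max 1 x) ^ (i:ℕ) := by gcongr; exact le_max_right _ _
    _ ≤ (max 1 x) ^ q := by
        apply pow_le_pow_right₀ (le_max_left _ _) i.2.le
  have hden : (Nat.factorial j : ℝ) ≤ Real.Gamma (α * (↑(j * q + (i:ℕ))) + 1) := by
    rw [← Real.Gamma_nat_eq_factorial]
    have hj2 : (2:ℝ) ≤ (j:ℝ) := by exact_mod_cast h
    apply (Real.Gamma_strictMonoOn_Ici.monotoneOn) ?_ ?_ ?_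
    · simp only [Set.mem_Ici]; linarith
    · simp only [Set.mem_Ici]; linarith
    · linarith
  have hΓ := hΓpos (j * q + (i:ℕ))
  rw [Real.norm_eq_abs, abs_of_nonneg (by positivity)]
  exact div_le_div₀ (by positivity) hnum (by positivity) hden


lemma ml_summable {α : ℝ} (hα : 0 < α) (z : ℝ) :
    Summable (fun k : ℕ => (Real.Gamma (α * k + 1))⁻¹ * z ^ k) := by
  apply Summable.of_norm
  apply (ml_summable_abs hα |z| (abs_nonneg z)).congr
  intro k
  have h := (Real.Gamma_pos_of_pos (show (0:ℝ) < α * k + 1 by positivity))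
  rw [norm_mul, norm_inv, norm_pow, Real.norm_eq_abs, Real.norm_eq_abs, abs_of_pos h,
    div_eq_inv_mul]

lemma scalar_ml_forward {α lam : ℝ} (hα : 0 < α) (hlt : α < 1)
    (H : ∀ t s : ℝ, 0 ≤ t → 0 ≤ s →
      mlE α ((t + s) ^ α * lam) = mlE α (t ^ α * lam) * mlE α (s ^ α * lam)) :
    lam = 0 := by
  set a : ℕ → ℝ := fun k => (Real.Gamma (α * k + 1))⁻¹ * lam ^ k with ha
  have hml : ∀ c : ℝ, mlE α (c * lam) = ∑' k : ℕ, a k * c ^ k := by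
    intro c
    unfold mlE
    congr 1; funext k
    rw [mul_pow, ha]; ring
  have hS : ∀ y : ℝ, 0 ≤ y → Summable (fun k : ℕ => ‖a k * y ^ k‖) := by
    intro y hy
    apply (ml_summable_abs hα (|lam| * y) (by positivity)).congr
    intro k
    have h := (Real.Gamma_pos_of_pos (show 0 < α * k + 1 by positivity))
    rw [norm_mul, ha]
    simp only
    rw [norm_mul, norm_inv, norm_pow, norm_pow, Real.norm_eq_abs, Real.norm_eq_abs,
      Real.norm_eq_abs, abs_of_pos h, abs_of_nonneg hy, mul_pow]
    field_simp
  have hanti : ∀ (y : ℝ) (k : ℕ),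
      (∑ p ∈ Finset.HasAntidiagonal.antidiagonal k, (a p.1 * y ^ p.1) * (a p.2 * y ^ p.2))
        = (∑ p ∈ Finset.HasAntidiagonal.antidiagonal k, a p.1 * a p.2) * y ^ k := by
    intro y k
    rw [Finset.sum_mul]
    apply Finset.sum_congr rfl
    intro p hp
    have := Finset.HasAntidiagonal.mem_antidiagonal.mp hp
    rw [← this, pow_add]; ring
  have G : ∀ y : ℝ, 0 ≤ y →
      (∑' k : ℕ, a k * (2 ^ α * y) ^ k)
        = (∑' k : ℕ, a k * y ^ k) * (∑' k : ℕ, a k * y ^ k) := by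
    intro y hy
    set t : ℝ := y ^ α⁻¹ with htdef
    have ht : 0 ≤ t := Real.rpow_nonneg hy _
    have htα : t ^ α = y := by
      rw [htdef, ← Real.rpow_mul hy, inv_mul_cancel₀ hα.ne', Real.rpow_one]
    have hts : (t + t) ^ α = 2 ^ α * y := by
      rw [← two_mul, Real.mul_rpow (by norm_num) ht, htα]
    have h := H t t ht ht
    rw [hts, htα] at h
    rw [← hml (2 ^ α * y), ← hml y]; exact h
  have cauchy : ∀ y : ℝ, 0 ≤ y →
      (∑' k : ℕ, a k * y ^ k) * (∑' k : ℕ, a k * y ^ k)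
        = ∑' k : ℕ, (∑ p ∈ Finset.HasAntidiagonal.antidiagonal k, a p.1 * a p.2) * y ^ k := by
    intro y hy
    rw [tsum_mul_tsum_eq_tsum_sum_antidiagonal_of_summable_norm (hS y hy) (hS y hy)]
    congr 1; funext k
    exact hanti y k
  set b : ℕ → ℝ :=
    fun k => a k * (2 ^ α) ^ k - ∑ p ∈ Finset.HasAntidiagonal.antidiagonal k, a p.1 * a p.2 with hb
  have h2αpos : (0:ℝ) ≤ 2 ^ α := Real.rpow_nonneg (by norm_num) α
  have hA : Summable (fun k : ℕ => ‖a k * (2 ^ α) ^ k‖) := hS _ h2αpos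
  have hB : Summable (fun k : ℕ => ‖∑ p ∈ Finset.HasAntidiagonal.antidiagonal k, a p.1 * a p.2‖) := by
    apply (summable_norm_sum_mul_antidiagonal_of_summable_norm
      (hS 1 zero_le_one) (hS 1 zero_le_one)).congr
    intro k
    congr 1
    apply Finset.sum_congr rfl
    intro p _
    simp
  have habs : Summable (fun k : ℕ => |b k|) := by
    apply Summable.of_nonneg_of_le (fun k => abs_nonneg _) ?_ (hA.add hB)
    intro k
    rw [hb]
    simp only
    exact (abs_sub _ _).trans (by rw [Real.norm_eq_abs, Real.norm_eq_abs])
  have hzero : ∀ y : ℝ, 0 ≤ y → ∑' k : ℕ, b k * y ^ k = 0 := by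
    intro y hy
    have SA : Summable (fun k : ℕ => a k * (2 ^ α) ^ k * y ^ k) := by
      apply ((hS (2 ^ α * y) (by positivity)).of_norm).congr
      intro k; rw [mul_pow]; ring
    have SB : Summable (fun k : ℕ => (∑ p ∈ Finset.HasAntidiagonal.antidiagonal k, a p.1 * a p.2) * y ^ k) := by
      apply ((summable_norm_sum_mul_antidiagonal_of_summable_norm (hS y hy) (hS y hy)).of_norm).congr
      intro k
      exact hanti y k
    have : ∑' k : ℕ, b k * y ^ k
        = (∑' k : ℕ, a k * (2 ^ α) ^ k * y ^ k)
          - ∑' k : ℕ, (∑ p ∈ Finset.HasAntidiagonal.antidiagonal k, a p.1 * a p.2) * y ^ k := by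
      rw [← Summable.tsum_sub SA SB]
      congr 1; funext k
      rw [hb]; ring
    rw [this]
    have e1 : (∑' k : ℕ, a k * (2 ^ α) ^ k * y ^ k) = ∑' k : ℕ, a k * (2 ^ α * y) ^ k := by
      congr 1; funext k; rw [mul_pow]; ring
    rw [e1, G y hy, cauchy y hy, sub_self]
  have hb0 : b 0 = 0 := by
    rw [hb]
    simp [ha, Real.Gamma_one]
  have hb1 : b 1 = (2 ^ α - 2) * ((Real.Gamma (α + 1))⁻¹ * lam) := by
    rw [hb]
    simp only [ha]
    simp [Finset.Nat.antidiagonal_succ, Prod.map, Real.Gamma_one]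
    ring
  set M : ℝ := ∑' k : ℕ, |b (k + 2)| with hM
  have htail : Summable (fun k : ℕ => |b (k + 2)|) := (summable_nat_add_iff 2).mpr habs
  have hM0 : 0 ≤ M := tsum_nonneg fun k => abs_nonneg _
  have key : ∀ y : ℝ, 0 < y → y ≤ 1 → |b 1| * y ≤ M * y ^ 2 := by
    intro y hy hy1
    have habs' : Summable (fun k : ℕ => |b k * y ^ k|) := by
      apply Summable.of_nonneg_of_le (fun k => abs_nonneg _) ?_ habs
      intro k
      rw [abs_mul, abs_pow, abs_of_nonneg hy.le]
      calc |b k| * y ^ k ≤ |b k| * 1 := by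
            apply mul_le_mul_of_nonneg_left _ (abs_nonneg _)
            exact pow_le_one₀ hy.le hy1
      _ = |b k| := mul_one _
    have Sby : Summable (fun k : ℕ => b k * y ^ k) := habs'.of_abs
    have hz := hzero y hy.le
    rw [Sby.tsum_eq_zero_add] at hz
    have Sby1 : Summable (fun k : ℕ => b (k + 1) * y ^ (k + 1)) := (summable_nat_add_iff 1).mpr Sby
    rw [Sby1.tsum_eq_zero_add] at hz
    simp only [pow_zero, mul_one, hb0, zero_mul, zero_add] at hz
    have hz2 : b 1 * y ^ 1 = -∑' k : ℕ, b (k + 1 + 1) * y ^ (k + 1 + 1) := by linarith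
    have habs2 : Summable (fun k : ℕ => |b (k + 1 + 1) * y ^ (k + 1 + 1)|) :=
      (summable_nat_add_iff 2).mpr habs'
    have hbound : |∑' k : ℕ, b (k + 1 + 1) * y ^ (k + 1 + 1)| ≤ M * y ^ 2 := by
      have h1 : |∑' k : ℕ, b (k + 1 + 1) * y ^ (k + 1 + 1)|
          ≤ ∑' k : ℕ, |b (k + 1 + 1) * y ^ (k + 1 + 1)| := by
        exact norm_tsum_le_tsum_norm (f := fun k : ℕ => b (k + 1 + 1) * y ^ (k + 1 + 1)) habs2
      refine h1.trans ?_
      have h2 : ∀ k : ℕ, |b (k + 1 + 1) * y ^ (k + 1 + 1)| ≤ |b (k + 2)| * y ^ 2 := by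
        intro k
        rw [abs_mul, abs_pow, abs_of_nonneg hy.le]
        have hpow : y ^ (k + 1 + 1) ≤ y ^ 2 := pow_le_pow_of_le_one hy.le hy1 (by omega)
        show |b (k + 2)| * y ^ (k + 1 + 1) ≤ |b (k + 2)| * y ^ 2
        exact mul_le_mul_of_nonneg_left hpow (abs_nonneg _)
      refine (Summable.tsum_le_tsum h2 habs2 (htail.mul_right _)).trans ?_
      rw [tsum_mul_right]
    calc |b 1| * y = |b 1 * y ^ 1| := by
          rw [abs_mul, pow_one, abs_of_nonneg hy.le]
    _ = |∑' k : ℕ, b (k + 1 + 1) * y ^ (k + 1 + 1)| := by rw [hz2, abs_neg]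
    _ ≤ M * y ^ 2 := hbound
  have hb1zero : b 1 = 0 := by
    by_contra hne
    have hbp : 0 < |b 1| := abs_pos.mpr hne
    set y : ℝ := min 1 (|b 1| / (2 * (M + 1))) with hy
    have hypos : 0 < y := lt_min one_pos (by positivity)
    have hyle : y ≤ 1 := min_le_left _ _
    have h := key y hypos hyle
    have h2 : M * y ^ 2 ≤ M * ((|b 1| / (2 * (M + 1))) * y) := by
      rw [pow_two]
      have hyq : y ≤ |b 1| / (2 * (M + 1)) := min_le_right _ _
      exact mul_le_mul_of_nonneg_left (mul_le_mul_of_nonneg_right hyq hypos.le) hM0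
    have h3 : M * ((|b 1| / (2 * (M + 1))) * y) < |b 1| * y := by
      rw [← mul_assoc]
      apply mul_lt_mul_of_pos_right _ hypos
      rw [mul_div_assoc']
      rw [div_lt_iff₀ (by positivity)]
      nlinarith
    linarith
  rw [hb1] at hb1zero
  have h2α : (2:ℝ) ^ α < 2 := by
    calc (2:ℝ) ^ α < 2 ^ (1:ℝ) := (Real.rpow_lt_rpow_left_iff one_lt_two).mpr hlt
    _ = 2 := Real.rpow_one 2
  have hΓ : Real.Gamma (α + 1) ≠ 0 := (Real.Gamma_pos_of_pos (by linarith)).ne'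
  rcases mul_eq_zero.mp hb1zero with h | h
  · linarith
  · rcases mul_eq_zero.mp h with h' | h'
    · exact absurd h' (inv_ne_zero hΓ)
    · exact h'

lemma ml_matrix_conj {n : ℕ} {α : ℝ} (hα : 0 < α) (P : Matrix (Fin n) (Fin n) ℝ)
    (hP : IsUnit P) (d : Fin n → ℝ) (c : ℝ) :
    matrixMittagLeffler α (c • (P * Matrix.diagonal d * P⁻¹))
      = P * Matrix.diagonal (fun j => mlE α (c * d j)) * P⁻¹ := by
  have hdet : IsUnit P.det := (Matrix.isUnit_iff_isUnit_det P).mp hP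
  have hPP : P⁻¹ * P = 1 := Matrix.nonsing_inv_mul P hdet
  have hPP' : P * P⁻¹ = 1 := Matrix.mul_nonsing_inv P hdet
  have hconjpow : ∀ k : ℕ, (P * Matrix.diagonal d * P⁻¹) ^ k
      = P * (Matrix.diagonal d) ^ k * P⁻¹ := by
    intro k
    induction k with
    | zero => simp [hPP']
    | succ k ih =>
        rw [pow_succ, pow_succ, ih]
        rw [Matrix.mul_assoc (P * Matrix.diagonal d ^ k), Matrix.mul_assoc P (Matrix.diagonal d),
          Matrix.nonsing_inv_mul_cancel_left _ _ hdet, ← Matrix.mul_assoc,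
          Matrix.mul_assoc P (Matrix.diagonal d ^ k)]
  have term_eq : ∀ k : ℕ,
      (Real.Gamma (α * k + 1))⁻¹ • (c • (P * Matrix.diagonal d * P⁻¹)) ^ k
        = P * Matrix.diagonal (fun j => (Real.Gamma (α * k + 1))⁻¹ * (c * d j) ^ k) * P⁻¹ := by
    intro k
    rw [smul_pow, hconjpow, Matrix.diagonal_pow, smul_smul]
    have hfn : (fun j => (Real.Gamma (α * k + 1))⁻¹ * (c * d j) ^ k)
        = ((Real.Gamma (α * k + 1))⁻¹ * c ^ k) • (d ^ k) := by
      funext j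
      simp only [Pi.smul_apply, Pi.pow_apply, smul_eq_mul, mul_pow]
      ring
    rw [hfn, Matrix.diagonal_smul, Matrix.mul_smul, Matrix.smul_mul]
  have hdsum : HasSum
      (fun k : ℕ => Matrix.diagonal (fun j => (Real.Gamma (α * k + 1))⁻¹ * (c * d j) ^ k))
      (Matrix.diagonal (fun j => mlE α (c * d j))) := by
    refine Pi.hasSum.mpr ?_
    intro i
    rw [Pi.hasSum]
    intro i'
    by_cases hii : i = i'
    · subst hii
      simp only [Matrix.diagonal_apply_eq]
      exact (ml_summable hα (c * d i)).hasSum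
    · simp only [Matrix.diagonal_apply_ne _ hii]
      exact hasSum_zero
  let L : Matrix (Fin n) (Fin n) ℝ →ₗ[ℝ] Matrix (Fin n) (Fin n) ℝ :=
    { toFun := fun X => P * X * P⁻¹
      map_add' := by intro X Y; rw [Matrix.mul_add, Matrix.add_mul]
      map_smul' := by intro r X; rw [Matrix.mul_smul, Matrix.smul_mul, RingHom.id_apply] }
  have hsum : HasSum
      (fun k : ℕ => (Real.Gamma (α * k + 1))⁻¹ • (c • (P * Matrix.diagonal d * P⁻¹)) ^ k)
      (P * Matrix.diagonal (fun j => mlE α (c * d j)) * P⁻¹) := by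
    have hmap := (LinearMap.toContinuousLinearMap L).hasSum hdsum
    have : (fun k : ℕ => (LinearMap.toContinuousLinearMap L)
        (Matrix.diagonal (fun j => (Real.Gamma (α * k + 1))⁻¹ * (c * d j) ^ k)))
        = fun k : ℕ => (Real.Gamma (α * k + 1))⁻¹ • (c • (P * Matrix.diagonal d * P⁻¹)) ^ k := by
      funext k
      rw [term_eq k]
      rfl
    rw [this] at hmap
    exact hmap
  unfold matrixMittagLeffler
  exact hsum.tsum_eq

lemma mlE_one (z : ℝ) : mlE 1 z = Real.exp z := by
  rw [Real.exp_eq_exp_ℝ, NormedSpace.exp_eq_tsum (𝕂 := ℝ)]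
  unfold mlE
  congr 1; funext k
  rw [one_mul, Real.Gamma_nat_eq_factorial, smul_eq_mul]

lemma ml_matrix_zero {n : ℕ} (α : ℝ) :
    matrixMittagLeffler α (0 : Matrix (Fin n) (Fin n) ℝ) = 1 := by
  unfold matrixMittagLeffler
  rw [tsum_eq_single 0]
  · simp [Real.Gamma_one]
  · intro k hk
    rw [zero_pow hk, smul_zero]

theorem matrix_ml_semigroup_iff (n : ℕ) (A : Matrix (Fin n) (Fin n) ℝ)
    (hdiag : ∃ (P : Matrix (Fin n) (Fin n) ℝ) (d : Fin n → ℝ),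
      IsUnit P ∧ A = P * Matrix.diagonal d * P⁻¹)
    (α : ℝ) (hα : 0 < α) (hα1 : α ≤ 1) :
    (∀ t s : ℝ, 0 ≤ t → 0 ≤ s →
        matrixMittagLeffler α ((t + s) ^ α • A)
          = matrixMittagLeffler α (t ^ α • A) * matrixMittagLeffler α (s ^ α • A)) ↔
      (α = 1 ∨ A = 0) := by
  obtain ⟨P, d, hP, hA⟩ := hdiag
  have hdet : IsUnit P.det := (Matrix.isUnit_iff_isUnit_det P).mp hP
  have hPP : P⁻¹ * P = 1 := Matrix.nonsing_inv_mul P hdet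
  have cancel : ∀ X Y : Matrix (Fin n) (Fin n) ℝ, P * X * P⁻¹ = P * Y * P⁻¹ → X = Y := by
    intro X Y h
    have h2 := congrArg (fun Z => P⁻¹ * Z * P) h
    rwa [Matrix.mul_assoc P X P⁻¹, Matrix.mul_assoc P Y P⁻¹,
      Matrix.nonsing_inv_mul_cancel_left _ _ hdet, Matrix.nonsing_inv_mul_cancel_left _ _ hdet,
      Matrix.mul_assoc X P⁻¹ P, Matrix.mul_assoc Y P⁻¹ P, hPP,
      Matrix.mul_one, Matrix.mul_one] at h2
  have hconjmul : ∀ X Y : Matrix (Fin n) (Fin n) ℝ,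
      (P * X * P⁻¹) * (P * Y * P⁻¹) = P * (X * Y) * P⁻¹ := by
    intro X Y
    rw [Matrix.mul_assoc (P * X) P⁻¹ (P * Y * P⁻¹), Matrix.mul_assoc P Y P⁻¹,
      Matrix.nonsing_inv_mul_cancel_left _ _ hdet, ← Matrix.mul_assoc (P * X) Y P⁻¹,
      Matrix.mul_assoc P X Y]
  constructor
  · intro H
    rcases lt_or_eq_of_le hα1 with hlt | heq
    · right
      have hd : ∀ j, d j = 0 := by
        intro j
        apply scalar_ml_forward hα hlt
        intro t s ht hs
        have h := H t s ht hs
        rw [hA, ml_matrix_conj hα P hP d, ml_matrix_conj hα P hP d,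
          ml_matrix_conj hα P hP d, hconjmul, Matrix.diagonal_mul_diagonal] at h
        have h2 := cancel _ _ h
        have h4 : ∀ (f g : Fin n → ℝ), Matrix.diagonal f = Matrix.diagonal g → f = g := by
          intro f g hfg
          funext i
          have := congrFun (congrFun hfg i) i
          simpa [Matrix.diagonal_apply_eq] using this
        have h5 := congrFun (h4 _ _ h2) j
        simpa using h5
      rw [hA]
      have hd0 : d = 0 := funext hd
      have hdz : Matrix.diagonal (0 : Fin n → ℝ) = 0 := Matrix.diagonal_zero
      rw [hd0, hdz, Matrix.mul_zero, Matrix.zero_mul]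
    · left; exact heq
  · rintro (h1 | h0)
    · subst h1
      intro t s ht hs
      rw [hA, ml_matrix_conj one_pos P hP d, ml_matrix_conj one_pos P hP d,
        ml_matrix_conj one_pos P hP d, hconjmul, Matrix.diagonal_mul_diagonal]
      have hfun : (fun j => mlE 1 ((t + s) ^ (1:ℝ) * d j))
          = fun i => mlE 1 (t ^ (1:ℝ) * d i) * mlE 1 (s ^ (1:ℝ) * d i) := by
        funext j
        rw [Real.rpow_one, Real.rpow_one, Real.rpow_one, mlE_one, mlE_one, mlE_one,
          add_mul, Real.exp_add]
      rw [hfun]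
    · subst h0
      intro t s ht hs
      rw [smul_zero, smul_zero, smul_zero, ml_matrix_zero, mul_one]
end

section
/- Let α ∈ (0,1) and λ ∈ ℝ with λ ≠ 0. There is no continuous function F : ℝ → ℝ with F(0) = 1 satisfying F(t+s) = F(t)·F(s) for all t, s ∈ ℝ and F(t) = E_α(λ·t^α) for all t ≥ 0. -/
open Real Filter Topology

lemma gamma_arg_pos (α : ℝ) (hα : 0 < α) (n : ℕ) : 0 < Real.Gamma (α * n + 1) :=
  Real.Gamma_pos_of_pos (by positivity)

lemma gamma_ge_fact (α : ℝ) (hα : 0 < α) (n : ℕ) (h1 : 1 ≤ ⌊α * n⌋₊) :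
    (Nat.factorial ⌊α * n⌋₊ : ℝ) ≤ Real.Gamma (α * n + 1) := by
  set m := ⌊α * n⌋₊ with hm
  have hn0 : (0:ℝ) ≤ α * n := by positivity
  have hfl : (m:ℝ) ≤ α * n := Nat.floor_le hn0
  have h1' : (1:ℝ) ≤ m := by exact_mod_cast h1
  have hmem1 : ((m:ℝ) + 1) ∈ Set.Ici (2:ℝ) := by simp only [Set.mem_Ici]; linarith
  have hmem2 : (α * n + 1) ∈ Set.Ici (2:ℝ) := by simp only [Set.mem_Ici]; linarith
  have hmono := Real.Gamma_strictMonoOn_Ici.monotoneOn hmem1 hmem2 (by linarith)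
  calc (Nat.factorial m : ℝ) = Real.Gamma ((m:ℝ) + 1) :=
        (Real.Gamma_nat_eq_factorial m).symm
    _ ≤ Real.Gamma (α * n + 1) := hmono

lemma summable_ml (α : ℝ) (hα : 0 < α) (z : ℝ) :
    Summable (fun n : ℕ => z ^ n / Real.Gamma (α * n + 1)) := by
  set r := |z| with hr
  set R := (r + 1) ^ (2 / α) with hR
  have hr0 : 0 ≤ r := abs_nonneg z
  have hR1 : 1 ≤ R := Real.one_le_rpow (by linarith) (by positivity)
  have hRa : R ^ α = (r + 1) ^ (2:ℕ) := by
    rw [hR, ← Real.rpow_mul (by linarith), div_mul_cancel₀ _ (ne_of_gt hα),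
      show (2:ℝ) = ((2:ℕ):ℝ) by norm_num, Real.rpow_natCast]
  have hRar : r < R ^ α := by rw [hRa]; nlinarith
  have hRa0 : 0 < R ^ α := by positivity
  have hq : r / R ^ α < 1 := by rw [div_lt_one hRa0]; exact hRar
  have hq0 : 0 ≤ r / R ^ α := by positivity
  set q := r / R ^ α with hqdef
  set N := ⌈1 / α⌉₊ with hN
  rw [← summable_nat_add_iff N]
  set C := Real.exp R * R * q ^ N with hC
  have key : ∀ n : ℕ, |z ^ (n + N) / Real.Gamma (α * ↑(n + N) + 1)| ≤ C * q ^ n := by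
    intro n
    have hαn1 : (1:ℝ) ≤ α * ↑(n + N) := by
      have h1 : (1:ℝ)/α ≤ N := Nat.le_ceil _
      have h2 : (N:ℝ) ≤ ((n + N : ℕ) : ℝ) := by exact_mod_cast Nat.le_add_left N n
      calc (1:ℝ) = α * (1/α) := by field_simp
        _ ≤ α * N := by nlinarith
        _ ≤ α * ((n + N : ℕ) : ℝ) := by nlinarith
    set k := n + N with hk
    set m := ⌊α * (k:ℕ)⌋₊ with hm
    have hfl1 : 1 ≤ m := Nat.le_floor (by exact_mod_cast hαn1)
    have hG := gamma_ge_fact α hα k hfl1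
    have hGpos := gamma_arg_pos α hα k
    have hfactpos : (0:ℝ) < Nat.factorial m := by exact_mod_cast Nat.factorial_pos m
    have h1 : R ^ m / Nat.factorial m ≤ Real.exp R := Real.pow_div_factorial_le_exp R (le_trans zero_le_one hR1) m
    have hRm : R ^ (m:ℝ) ≤ Nat.factorial m * Real.exp R := by
      rw [div_le_iff₀ hfactpos] at h1
      rw [Real.rpow_natCast]; linarith
    have hlt : α * (k:ℕ) < m + 1 := Nat.lt_floor_add_one _
    have h2 : R ^ (α * (k:ℕ)) ≤ R ^ ((m:ℝ) + 1) :=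
      Real.rpow_le_rpow_of_exponent_le hR1 (by push_cast; linarith)
    have h3 : R ^ ((m:ℝ)+1) = R ^ (m:ℝ) * R := by
      rw [Real.rpow_add (by linarith : (0:ℝ) < R), Real.rpow_one]
    have hRak : R ^ (α * (k:ℕ)) = (R ^ α) ^ k := by
      rw [← Real.rpow_natCast (R ^ α) k]
      exact Real.rpow_mul (le_trans zero_le_one hR1) α k
    have hbound : (R ^ α) ^ k ≤ Nat.factorial m * Real.exp R * R := by
      rw [← hRak]
      calc R ^ (α * (k:ℕ)) ≤ R ^ (m:ℝ) * R := h3 ▸ h2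
        _ ≤ Nat.factorial m * Real.exp R * R := by nlinarith
    have habs : |z ^ k / Real.Gamma (α * (k:ℕ) + 1)| ≤ r ^ k / Nat.factorial m := by
      rw [abs_div, abs_pow, abs_of_pos hGpos, ← hr]
      exact div_le_div_of_nonneg_left (by positivity) hfactpos hG
    refine habs.trans ?_
    have hRk : (0:ℝ) < (R ^ α) ^ k := by positivity
    have hgoal : r ^ k / Nat.factorial m ≤ (Real.exp R * R * r ^ k) / (R ^ α) ^ k := by
      rw [div_le_div_iff₀ hfactpos hRk]
      have h4 := mul_le_mul_of_nonneg_left hbound (pow_nonneg hr0 k)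
      nlinarith
    refine hgoal.trans_eq ?_
    rw [hC, hqdef, div_pow, hk]
    rw [pow_add r n N, pow_add (R^α) n N]
    field_simp
    ring_nf
    rw [inv_pow, mul_assoc (r ^ n * r ^ N), mul_inv_cancel₀ (pow_ne_zero n hRa0.ne'), mul_one]
  have hbsum : Summable (fun n : ℕ => C * q ^ n) :=
    (summable_geometric_of_lt_one hq0 hq).mul_left C
  exact (hbsum.of_nonneg_of_le (fun n => abs_nonneg _) key).of_abs

noncomputable def mittagLeffler (α z : ℝ) : ℝ := ∑' n : ℕ, z ^ n / Real.Gamma (α * n + 1)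

lemma ml_tendsto (α : ℝ) (hα : 0 < α) :
    Tendsto (fun z : ℝ => (mittagLeffler α z - 1) / z) (𝓝[≠] (0:ℝ))
      (𝓝 (1 / Real.Gamma (α + 1))) := by
  set c := 1 / Real.Gamma (α + 1) with hc
  set M := ∑' n : ℕ, 1 / Real.Gamma (α * ((n:ℝ) + 2) + 1) with hM
  have hMsum : Summable (fun n : ℕ => 1 / Real.Gamma (α * ((n:ℝ) + 2) + 1)) := by
    refine ((summable_nat_add_iff 2).2 (summable_ml α hα 1)).congr fun n => ?_
    push_cast
    rw [one_pow]
  have hM0 : 0 ≤ M := tsum_nonneg fun n => by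
    have := Real.Gamma_pos_of_pos (show (0:ℝ) < α * ((n:ℝ)+2) + 1 by positivity)
    positivity
  have main : ∀ z : ℝ, z ≠ 0 → |z| ≤ 1 →
      |(mittagLeffler α z - 1) / z - c| ≤ |z| * M := by
    intro z hz hz1
    have hsum := summable_ml α hα z
    have h2 : Summable (fun n : ℕ => z ^ (n+2) / Real.Gamma (α * ((n+2:ℕ):ℝ) + 1)) :=
      (summable_nat_add_iff 2).2 hsum
    have hsU : Summable (fun n : ℕ => z ^ n / Real.Gamma (α * ((n:ℝ) + 2) + 1)) := by
      refine (h2.mul_right ((z^2)⁻¹)).congr fun n => ?_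
      push_cast
      rw [pow_add]
      field_simp
    have e1 : mittagLeffler α z = 1 + z * c +
        z^2 * ∑' n : ℕ, z ^ n / Real.Gamma (α * ((n:ℝ) + 2) + 1) := by
      rw [mittagLeffler, Summable.tsum_eq_zero_add hsum,
        Summable.tsum_eq_zero_add ((summable_nat_add_iff 1).2 hsum), ← tsum_mul_left]
      have ht : ∀ n : ℕ, z ^ (n + 1 + 1) / Real.Gamma (α * ((n + 1 + 1 : ℕ):ℝ) + 1)
          = z ^ 2 * (z ^ n / Real.Gamma (α * ((n:ℝ) + 2) + 1)) := by
        intro n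
        push_cast
        rw [show n + 1 + 1 = n + 2 from rfl, pow_add]
        ring_nf
      rw [tsum_congr ht]
      have hΓpos := Real.Gamma_pos_of_pos (show (0:ℝ) < α + 1 by linarith)
      simp only [pow_zero, Nat.cast_zero, mul_zero, zero_add, Real.Gamma_one,
        pow_one, Nat.cast_one, mul_one, div_one]
      rw [hc]
      field_simp
      ring
    set U := ∑' n : ℕ, z ^ n / Real.Gamma (α * ((n:ℝ) + 2) + 1) with hU
    have e2 : (mittagLeffler α z - 1) / z - c = z * U := by
      rw [e1]
      field_simp
      ring
    rw [e2, abs_mul]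
    refine mul_le_mul_of_nonneg_left ?_ (abs_nonneg z)
    have habs : |U| ≤ ∑' n : ℕ, |z ^ n / Real.Gamma (α * ((n:ℝ) + 2) + 1)| := by
      simpa only [Real.norm_eq_abs] using
        norm_tsum_le_tsum_norm (f := fun n : ℕ => z ^ n / Real.Gamma (α * ((n:ℝ) + 2) + 1))
          (by simpa only [Real.norm_eq_abs] using hsU.abs)
    refine habs.trans (Summable.tsum_le_tsum (fun n => ?_) hsU.abs hMsum)
    have hΓpos := Real.Gamma_pos_of_pos (show (0:ℝ) < α * ((n:ℝ)+2) + 1 by positivity)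
    rw [abs_div, abs_pow, abs_of_pos hΓpos]
    gcongr
    exact pow_le_one₀ (abs_nonneg z) hz1
  rw [← tendsto_sub_nhds_zero_iff]
  have hg : Tendsto (fun z : ℝ => |z| * M) (𝓝[≠] (0:ℝ)) (𝓝 0) := by
    have h0 : Tendsto (fun z : ℝ => |z| * M) (𝓝 (0:ℝ)) (𝓝 (|(0:ℝ)| * M)) :=
      (continuous_abs.mul continuous_const).tendsto 0
    simpa using h0.mono_left nhdsWithin_le_nhds
  refine squeeze_zero_norm' ?_ hg
  have h1 : ∀ᶠ z : ℝ in 𝓝[≠] (0:ℝ), |z| ≤ 1 := by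
    have h2 : ∀ᶠ z : ℝ in 𝓝 (0:ℝ), |z| ≤ 1 := by
      filter_upwards [Metric.ball_mem_nhds (0:ℝ) one_pos] with z hz
      rw [Metric.mem_ball, Real.dist_eq, sub_zero] at hz
      exact le_of_lt hz
    exact h2.filter_mono nhdsWithin_le_nhds
  filter_upwards [h1, self_mem_nhdsWithin] with z hz1 hz
  simpa only [Real.norm_eq_abs] using main z hz hz1

noncomputable def mittagLeffler2 (α β z : ℝ) : ℝ := ∑' n : ℕ, z ^ n / Real.Gamma (α * n + β)

theorem ml_no_group_extension (α : ℝ) (hα : 0 < α) (hα1 : α < 1) (lam : ℝ) (hlam : lam ≠ 0) :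
    ¬ ∃ F : ℝ → ℝ, Continuous F ∧ F 0 = 1 ∧
      (∀ t s : ℝ, F (t + s) = F t * F s) ∧
      (∀ t : ℝ, 0 ≤ t → F t = mittagLeffler α (lam * t ^ α)) := by
  rintro ⟨F, hF, hF0, hmul, heq⟩
  set c := 1 / Real.Gamma (α + 1) with hcdef
  have hΓ : 0 < Real.Gamma (α + 1) := Real.Gamma_pos_of_pos (by linarith)
  have hc : 0 < c := by positivity
  set L := lam * c with hLdef
  have hL0 : L ≠ 0 := mul_ne_zero hlam (ne_of_gt hc)
  have hmap : Tendsto (fun t : ℝ => lam * t ^ α) (𝓝[>] (0:ℝ)) (𝓝[≠] (0:ℝ)) := by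
    apply tendsto_nhdsWithin_of_tendsto_nhds_of_eventually_within
    · have h1 : Tendsto (fun t : ℝ => t ^ α) (𝓝 (0:ℝ)) (𝓝 ((0:ℝ) ^ α)) :=
        (Real.continuousAt_rpow_const 0 α (Or.inr (le_of_lt hα))).tendsto
      have h2 := (h1.const_mul lam).mono_left (nhdsWithin_le_nhds (s := Set.Ioi (0:ℝ)))
      simpa [Real.zero_rpow (ne_of_gt hα)] using h2
    · filter_upwards [self_mem_nhdsWithin] with t ht
      have htp : (0:ℝ) < t := Set.mem_Ioi.mp ht
      have : (0:ℝ) < t ^ α := Real.rpow_pos_of_pos htp α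
      simp only [Set.mem_compl_iff, Set.mem_singleton_iff]
      exact mul_ne_zero hlam (ne_of_gt this)
  have key := (ml_tendsto α hα).comp hmap
  have lim1 : Tendsto (fun t : ℝ => (F t - 1) / t ^ α) (𝓝[>] (0:ℝ)) (𝓝 L) := by
    have h3 := key.const_mul lam
    rw [show lam * (1 / Real.Gamma (α + 1)) = L from rfl] at h3
    refine h3.congr' ?_
    filter_upwards [self_mem_nhdsWithin] with t ht
    have htp : (0:ℝ) < t := Set.mem_Ioi.mp ht
    have htα : (0:ℝ) < t ^ α := Real.rpow_pos_of_pos htp α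
    simp only [Function.comp]
    rw [← heq t (le_of_lt htp)]
    field_simp
  have hdouble : Tendsto (fun t : ℝ => 2 * t) (𝓝[>] (0:ℝ)) (𝓝[>] (0:ℝ)) := by
    apply tendsto_nhdsWithin_of_tendsto_nhds_of_eventually_within
    · have h0 : Tendsto (fun t : ℝ => 2 * t) (𝓝 (0:ℝ)) (𝓝 (2 * 0)) :=
        (continuous_const.mul continuous_id).tendsto 0
      simpa using h0.mono_left nhdsWithin_le_nhds
    · filter_upwards [self_mem_nhdsWithin] with t ht
      have htp : (0:ℝ) < t := Set.mem_Ioi.mp ht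
      exact Set.mem_Ioi.mpr (by linarith)
  have limA : Tendsto (fun t : ℝ => (F (2 * t) - 1) / t ^ α) (𝓝[>] (0:ℝ))
      (𝓝 ((2:ℝ) ^ α * L)) := by
    have h1 := lim1.comp hdouble
    have h2 := h1.const_mul ((2:ℝ) ^ α)
    refine h2.congr' ?_
    filter_upwards [self_mem_nhdsWithin] with t ht
    have htp : (0:ℝ) < t := Set.mem_Ioi.mp ht
    have h2a : (0:ℝ) < (2:ℝ) ^ α := Real.rpow_pos_of_pos two_pos α
    have htα : (0:ℝ) < t ^ α := Real.rpow_pos_of_pos htp α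
    simp only [Function.comp]
    rw [Real.mul_rpow (by norm_num) (le_of_lt htp)]
    field_simp
  have limB : Tendsto (fun t : ℝ => (F (2 * t) - 1) / t ^ α) (𝓝[>] (0:ℝ))
      (𝓝 (L * 2)) := by
    have hF1 : Tendsto F (𝓝[>] (0:ℝ)) (𝓝 1) := by
      have h0 := hF.tendsto 0
      rw [hF0] at h0
      exact h0.mono_left nhdsWithin_le_nhds
    have hprod := lim1.mul (hF1.add (tendsto_const_nhds (x := (1:ℝ))))
    rw [show (1:ℝ) + 1 = 2 by norm_num] at hprod
    refine hprod.congr' ?_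
    filter_upwards [self_mem_nhdsWithin] with t ht
    have htp : (0:ℝ) < t := Set.mem_Ioi.mp ht
    have htα : (0:ℝ) < t ^ α := Real.rpow_pos_of_pos htp α
    have hFt : F (2 * t) = F t * F t := by
      rw [show (2:ℝ) * t = t + t by ring, hmul t t]
    rw [hFt]
    field_simp
    ring
  have huniq : (2:ℝ) ^ α * L = L * 2 := tendsto_nhds_unique limA limB
  have h2lt : (2:ℝ) ^ α < 2 := by
    have := Real.rpow_lt_rpow_of_exponent_lt (x := 2) one_lt_two hα1
    simpa using this
  have : ((2:ℝ) ^ α - 2) * L = 0 := by linarith [huniq]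
  rcases mul_eq_zero.mp this with h | h
  · linarith
  · exact hL0 h
end
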